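/- arXiv:1609.03543 — 2 statements merged into one kernel-verified Lean document; each statement's English description precedes it below -/
import Mathlib

section
/- Let Γ be a consistent, computably enumerable theory and P = (P_n) a logical inductor over Γ. Then P_∞ is coherent in the sense of Gaifman: (i) if Γ ⊢ φ then P_∞(φ) = 1; (ii) if Γ ⊢ ¬φ then P_∞(φ) = 0; (iii) if Γ ⊢ ¬(φ ∧ ψ) then P_∞(φ ∨ ψ) = P_∞(φ) + P_∞(ψ). (These are exactly the conditions under which Pr({W ∈ PC(Γ) : W(φ) = 1}) := P_∞(φ) extends to a probability measure on the set PC(Γ) of worlds consistent with Γ.) -/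
open Filter

namespace LogicalInduction

/-- Sentences: Boolean combinations of countably many atomic sentences. -/
inductive Sentence : Type
  | atom : ℕ → Sentence
  | not : Sentence → Sentence
  | and : Sentence → Sentence → Sentence
  | or : Sentence → Sentence → Sentence
  | imp : Sentence → Sentence → Sentence
  | iff : Sentence → Sentence → Sentence
  deriving DecidableEq

/-- A fixed computable encoding of sentences into `ℕ`. -/
def encodeSentence : Sentence → ℕ
  | .atom k => Nat.pair 0 k
  | .not φ => Nat.pair 1 (encodeSentence φ)
  | .and φ ψ => Nat.pair 2 (Nat.pair (encodeSentence φ) (encodeSentence ψ))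
  | .or φ ψ => Nat.pair 3 (Nat.pair (encodeSentence φ) (encodeSentence ψ))
  | .imp φ ψ => Nat.pair 4 (Nat.pair (encodeSentence φ) (encodeSentence ψ))
  | .iff φ ψ => Nat.pair 5 (Nat.pair (encodeSentence φ) (encodeSentence ψ))

/-- Worlds: `{0,1}`-valued valuations, represented as boolean truth assignments. -/
abbrev World : Type := Sentence → Bool

/-- The real value (0 or 1) that a world assigns to a sentence. -/
noncomputable def World.val (W : World) (φ : Sentence) : ℝ := if W φ then 1 else 0

/-- Propositional consistency: the truth values respect the Boolean connectives. -/
def World.PCons (W : World) : Prop :=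
  (∀ φ, W (.not φ) = !W φ) ∧
  (∀ φ ψ, W (.and φ ψ) = (W φ && W ψ)) ∧
  (∀ φ ψ, W (.or φ ψ) = (W φ || W ψ)) ∧
  (∀ φ ψ, W (.imp φ ψ) = (!W φ || W ψ)) ∧
  (∀ φ ψ, W (.iff φ ψ) = (W φ == W ψ))

/-- `PC D`: propositionally consistent worlds assigning `true` to every element of `D`. -/
def PC (D : Set Sentence) : Set World := {W | W.PCons ∧ ∀ φ ∈ D, W φ = true}

/-- `Γ ⊢ φ`: every world propositionally consistent with `Γ` makes `φ` true. -/
def Proves (Γ : Set Sentence) (φ : Sentence) : Prop := ∀ W ∈ PC Γ, W φ = true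

/-- A theory is consistent if some propositionally consistent world satisfies it. -/
def Consistent (Γ : Set Sentence) : Prop := (PC Γ).Nonempty

/-- Expressible features: formal expressions built from rational constants, price
symbols `φ^{*i}`, addition, multiplication, max, and safe reciprocation. -/
inductive Feature : Type
  | const : ℚ → Feature
  | price : Sentence → ℕ → Feature
  | add : Feature → Feature → Feature
  | mul : Feature → Feature → Feature
  | max : Feature → Feature → Feature
  | safeInv : Feature → Feature

/-- Value of an expressible feature on a sequence of (real-valued) valuations. -/
noncomputable def Feature.eval (V : ℕ → Sentence → ℝ) : Feature → ℝ
  | .const q => (q : ℝ)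
  | .price φ i => V i φ
  | .add f g => f.eval V + g.eval V
  | .mul f g => f.eval V * g.eval V
  | .max f g => Max.max (f.eval V) (g.eval V)
  | .safeInv f => 1 / Max.max 1 (f.eval V)

/-- Rank of a feature: the largest day whose prices it mentions. -/
def Feature.rank : Feature → ℕ
  | .const _ => 0
  | .price _ i => i
  | .add f g => Max.max f.rank g.rank
  | .mul f g => Max.max f.rank g.rank
  | .max f g => Max.max f.rank g.rank
  | .safeInv f => f.rank

/-- A fixed computable encoding of features into `ℕ`. -/
def encodeFeature : Feature → ℕ
  | .const q => Nat.pair 0 (Encodable.encode q)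
  | .price φ i => Nat.pair 1 (Nat.pair (encodeSentence φ) i)
  | .add f g => Nat.pair 2 (Nat.pair (encodeFeature f) (encodeFeature g))
  | .mul f g => Nat.pair 3 (Nat.pair (encodeFeature f) (encodeFeature g))
  | .max f g => Nat.pair 4 (Nat.pair (encodeFeature f) (encodeFeature g))
  | .safeInv f => Nat.pair 5 (encodeFeature f)

/-- A fixed computable encoding of lists into `ℕ`. -/
def encodeList {α : Type} (e : α → ℕ) : List α → ℕ
  | [] => 0
  | a :: l => Nat.pair (e a) (encodeList e l) + 1

/-- A trading strategy: a finite formal sum `ξ₁·(φ₁ − φ₁^{*n}) + ⋯ + ξ_k·(φ_k − φ_k^{*n})`,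
recorded as the list of pairs `(ξ_j, φ_j)`. -/
structure Trade : Type where
  terms : List (Feature × Sentence)

/-- The empty (zero) trading strategy. -/
def zeroTrade : Trade := ⟨[]⟩

/-- A trading strategy is valid for day `n` if all its features have rank `≤ n`. -/
def Trade.RankLE (T : Trade) (n : ℕ) : Prop := ∀ p ∈ T.terms, Feature.rank p.1 ≤ n

/-- `T[φ]`: the (evaluated) coefficient of the sentence `φ` in the trade `T`. -/
noncomputable def Trade.coef (T : Trade) (V : ℕ → Sentence → ℝ) (φ : Sentence) : ℝ :=
  ((T.terms.filter fun p => decide (p.2 = φ)).map fun p => p.1.eval V).sum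

/-- `T[1]`: the cash term of a day-`n` trading strategy, `-Σ_j ξ_j·φ_j^{*n}`. -/
noncomputable def Trade.cash (T : Trade) (n : ℕ) (V : ℕ → Sentence → ℝ) : ℝ :=
  -((T.terms.map fun p => p.1.eval V * V n p.2).sum)

/-- `W(T(V))`: the value in world `W` of the holdings from the trade `T`,
made on day `n` against the prices `V`. -/
noncomputable def Trade.value (T : Trade) (n : ℕ) (V : ℕ → Sentence → ℝ) (W : World) : ℝ :=
  T.cash n V + (T.terms.map fun p => p.1.eval V * W.val p.2).sum

/-- A fixed computable encoding of trading strategies into `ℕ`. -/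
def encodeTrade (T : Trade) : ℕ :=
  encodeList (fun p => Nat.pair (encodeFeature p.1) (encodeSentence p.2)) T.terms

/-- A trader: one trading strategy for each day. -/
structure Trader : Type where
  strat : ℕ → Trade
  rank_le : ∀ n, (strat n).RankLE n

/-- Polynomial-time computability: computable by a Turing machine in time polynomial in
the input written in unary (i.e. polynomial in `n`). -/
def PolyTimeComputable (f : ℕ → ℕ) : Prop :=
  Nonempty (Turing.TM2ComputableInPolyTime Computability.unaryEncodingNat.encode
    Computability.unaryEncodingNat.encode f)

/-- A trader is efficiently computable if the expression of its day-`n` trading strategy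
is computable in time polynomial in `n`. -/
def Trader.EC (T : Trader) : Prop := PolyTimeComputable fun n => encodeTrade (T.strat n)

/-- A market: a computable sequence of valuations with values in `ℚ ∩ [0,1]`. -/
structure Market : Type where
  price : ℕ → Sentence → ℚ
  nonneg : ∀ n φ, 0 ≤ price n φ
  le_one : ∀ n φ, price n φ ≤ 1
  comp : ∃ g : ℕ → ℕ, Computable g ∧
    ∀ n φ, g (Nat.pair n (encodeSentence φ)) = Encodable.encode (price n φ)

/-- The market price, as a real number. -/
noncomputable def Market.val (P : Market) (n : ℕ) (φ : Sentence) : ℝ := (P.price n φ : ℝ)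

/-- The market, viewed as a sequence of real-valued valuations. -/
noncomputable def Market.valSeq (P : Market) : ℕ → Sentence → ℝ := fun n φ => (P.price n φ : ℝ)

/-- A deductive process: a computable nested sequence of finite sets of sentences. -/
structure DeductiveProcess : Type where
  sets : ℕ → List Sentence
  nested : ∀ n, ∀ φ ∈ sets n, φ ∈ sets (n + 1)
  comp : ∃ g : ℕ → ℕ, Computable g ∧ ∀ n, g n = encodeList encodeSentence (sets n)

/-- The worlds plausible on day `n`: those propositionally consistent with `D_n`. -/
def DeductiveProcess.PCn (D : DeductiveProcess) (n : ℕ) : Set World :=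
  PC {φ | φ ∈ D.sets n}

/-- `D_∞`, the union of the finite stages of the deductive process. -/
def DeductiveProcess.limit (D : DeductiveProcess) : Set Sentence := {φ | ∃ n, φ ∈ D.sets n}

/-- `D` is `Γ`-complete if `PC(D_∞) = PC(Γ)`. -/
def GammaComplete (D : DeductiveProcess) (Γ : Set Sentence) : Prop := PC D.limit = PC Γ

/-- `W(Σ_{i≤n} T_i(P))`: the value of a trader's net holdings through day `n` in world `W`. -/
noncomputable def holdings (T : Trader) (P : Market) (n : ℕ) (W : World) : ℝ :=
  ∑ i ∈ Finset.range (n + 1), (T.strat i).value i P.valSeq W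

/-- The set of plausible values of a trader's holdings across all days. -/
def plausibleValues (T : Trader) (P : Market) (D : DeductiveProcess) : Set ℝ :=
  {x | ∃ n, ∃ W ∈ D.PCn n, x = holdings T P n W}

/-- A trader exploits a market relative to a deductive process if its plausible
holdings values are bounded below but unbounded above. -/
def Exploits (T : Trader) (P : Market) (D : DeductiveProcess) : Prop :=
  BddBelow (plausibleValues T P D) ∧ ¬BddAbove (plausibleValues T P D)

/-- The logical induction criterion: no efficiently computable trader exploits `P`
relative to `D`. -/
def LogicalInductor (P : Market) (D : DeductiveProcess) : Prop :=
  ∀ T : Trader, T.EC → ¬Exploits T P D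

/-- A logical inductor over a theory: a logical inductor over some `Γ`-complete
deductive process. -/
def LogicalInductorOver (P : Market) (Γ : Set Sentence) : Prop :=
  ∃ D : DeductiveProcess, GammaComplete D Γ ∧ LogicalInductor P D

/-- Computably enumerable theories. -/
def CETheory (Γ : Set Sentence) : Prop :=
  ∃ g : ℕ → ℕ, Computable g ∧ ∀ φ, φ ∈ Γ ↔ ∃ n, g n = encodeSentence φ + 1

/-- Efficiently computable sequences of sentences. -/
def ECSentences (φ : ℕ → Sentence) : Prop := PolyTimeComputable fun n => encodeSentence (φ n)

/-- Efficiently computable sequences of rational numbers. -/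
def ECRats (p : ℕ → ℚ) : Prop := PolyTimeComputable fun n => Encodable.encode (p n)

end LogicalInduction


open Turing Computability Turing.TM2.Stmt StateTransition

def constMachine (c : ℕ) : Turing.FinTM2 where
  K := Unit
  k₀ := ⟨⟩
  k₁ := ⟨⟩
  Γ _ := Bool
  Λ := Option (Fin (c+1))
  main := none
  σ := Option Bool
  initialState := none
  m := fun l => match l with
    | none => pop ⟨⟩ (fun _ v => v)
        (branch (fun s => s.isSome) (goto fun _ => none)
          (goto fun _ => some (Fin.last c)))
    | some i => if _ : (i : ℕ) = 0 then halt
        else push ⟨⟩ (fun _ => true) (goto fun _ => some ⟨(i : ℕ) - 1, by omega⟩)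

def stepOne (tm : FinTM2) (a b : tm.Cfg) (h : tm.step a = some b) :
    EvalsToInTime tm.step a (some b) 1 :=
  ⟨⟨1, h⟩, le_refl 1⟩

lemma unary_replicate (c : ℕ) : unaryEncodeNat c = List.replicate c true := by
  induction c with
  | zero => rfl
  | succ k ih => simpa [unaryEncodeNat, List.replicate_succ] using ih

lemma unary_length (n : ℕ) : (unaryEncodeNat n).length = n := by
  simp [unary_replicate]

def pushPhase (c : ℕ) : ∀ (i : ℕ) (hi : i < c + 1) (s : List Bool),
    EvalsToInTime (constMachine c).step
      ⟨some (some ⟨i, hi⟩), none, fun _ => s⟩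
      (some ⟨none, none, fun _ => List.replicate i true ++ s⟩) (i + 1)
  | 0, hi, s => by
    refine stepOne _ _ _ ?_
    simp [constMachine, FinTM2.step, Turing.TM2.step, Turing.TM2.stepAux]
    rfl
  | (i+1), hi, s => by
    have h1 : (constMachine c).step ⟨some (some ⟨i+1, hi⟩), none, fun _ => s⟩ =
        some ⟨some (some ⟨i, by omega⟩), none, fun _ => (true :: s)⟩ := by
      simp [constMachine, FinTM2.step, Turing.TM2.step, Turing.TM2.stepAux]
      congr 2
    have h2 := pushPhase c i (by omega) (true :: s)
    have := EvalsToInTime.trans _ 1 (i+1) _ _ _ (stepOne _ _ _ h1) h2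
    convert this using 2
    rw [List.replicate_succ']
    simp

def erasePhase (c : ℕ) : ∀ (s : List Bool) (v : Option Bool),
    EvalsToInTime (constMachine c).step
      ⟨some none, v, fun _ => s⟩
      (some ⟨some (some (Fin.last c)), none, fun _ => []⟩) (s.length + 1)
  | [], v => by
    refine stepOne _ _ _ ?_
    simp [constMachine, FinTM2.step, Turing.TM2.step, Turing.TM2.stepAux]
    congr 2
  | (b :: t), v => by
    have h1 : (constMachine c).step ⟨some none, v, fun _ => (b :: t)⟩ =
        some ⟨some none, some b, fun _ => t⟩ := by
      simp [constMachine, FinTM2.step, Turing.TM2.step, Turing.TM2.stepAux]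
      congr 2
    have h2 := erasePhase c t (some b)
    have := EvalsToInTime.trans _ 1 (t.length + 1) _ _ _ (stepOne _ _ _ h1) h2
    convert this using 2
    rfl

lemma map_cast (l : List Bool) : List.map (Equiv.cast rfl : Bool ≃ Bool).invFun l = l := by
  simp

theorem polyTimeConst' (c : ℕ) : Nonempty (Turing.TM2ComputableInPolyTime
    Computability.unaryEncodingNat.encode Computability.unaryEncodingNat.encode (fun _ => c)) := by
  constructor
  refine ⟨⟨constMachine c, Equiv.cast rfl, Equiv.cast rfl⟩,
    Polynomial.X + Polynomial.C (c + 2), fun n => ?_⟩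
  have hinit : initList (constMachine c)
      (List.map (Equiv.cast rfl : Bool ≃ Bool).invFun (unaryEncodeNat n)) =
      ⟨some none, none, fun _ => unaryEncodeNat n⟩ := by
    unfold initList
    simp [constMachine]
    rfl
  have hhalt : haltList (constMachine c)
      (List.map (Equiv.cast rfl : Bool ≃ Bool).invFun (unaryEncodeNat c)) =
      ⟨none, none, fun _ => List.replicate c true ++ []⟩ := by
    unfold haltList
    simp [constMachine, unary_replicate]
    rfl
  have h1 := erasePhase c (unaryEncodeNat n) none
  have h2 : EvalsToInTime (constMachine c).step
      ⟨some (some (Fin.last c)), none, fun _ => []⟩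
      (some ⟨none, none, fun _ => List.replicate c true ++ []⟩) (c + 1) :=
    pushPhase c c (by omega) []
  have h := EvalsToInTime.trans _ _ _ _ _ _ h1 h2
  show EvalsToInTime (constMachine c).step
      (initList (constMachine c) (List.map (Equiv.cast rfl : Bool ≃ Bool).invFun
        (unaryEncodeNat n)))
      (Option.map (haltList (constMachine c))
        (some (List.map (Equiv.cast rfl : Bool ≃ Bool).invFun (unaryEncodeNat c)))) _
  rw [hinit, Option.map_some, hhalt]
  refine ⟨h.toEvalsTo, le_trans h.steps_le_m ?_⟩
  show c + 1 + ((unaryEncodeNat n).length + 1) ≤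
    Polynomial.eval (unaryEncodeNat n).length (Polynomial.X + Polynomial.C (c + 2))
  simp [unary_length]
  omega

namespace LogicalInduction

theorem polyTimeConst (c : ℕ) : PolyTimeComputable (fun _ => c) := polyTimeConst' c

/-! ### Topology and compactness -/

lemma isClosed_eval (φ : Sentence) (b : Bool) : IsClosed {W : World | W φ = b} :=
  isClosed_eq (f := fun W : World => W φ) (g := fun _ => b) (continuous_apply φ) continuous_const

lemma isClosed_PCons : IsClosed {W : World | W.PCons} := by
  have key : ∀ (f : Sentence → Sentence) (g : Bool → Bool),
      IsClosed {W : World | ∀ φ, W (f φ) = g (W φ)} := by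
    intro f g
    have : {W : World | ∀ φ, W (f φ) = g (W φ)} = ⋂ φ, {W : World | W (f φ) = g (W φ)} := by
      ext W; simp
    rw [this]
    refine isClosed_iInter fun φ =>
      isClosed_eq (f := fun W : World => W (f φ)) (g := fun W : World => g (W φ))
        (continuous_apply (f φ)) ?_
    exact (continuous_of_discreteTopology (α := Bool) (β := Bool) (f := g)).comp
      (continuous_apply φ)
  have key2 : ∀ (f : Sentence → Sentence → Sentence) (g : Bool → Bool → Bool),
      IsClosed {W : World | ∀ φ ψ, W (f φ ψ) = g (W φ) (W ψ)} := by
    intro f g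
    have : {W : World | ∀ φ ψ, W (f φ ψ) = g (W φ) (W ψ)} =
        ⋂ φ, ⋂ ψ, {W : World | W (f φ ψ) = g (W φ) (W ψ)} := by
      ext W; simp
    rw [this]
    refine isClosed_iInter fun φ => isClosed_iInter fun ψ =>
      isClosed_eq (f := fun W : World => W (f φ ψ)) (g := fun W : World => g (W φ) (W ψ))
        (continuous_apply (f φ ψ)) ?_
    have c1 : Continuous (fun W : World => (W φ, W ψ)) :=
      (continuous_apply φ).prodMk (continuous_apply ψ)
    exact (continuous_of_discreteTopology (α := Bool × Bool) (β := Bool)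
      (f := fun p => g p.1 p.2)).comp c1
  have : {W : World | W.PCons} =
      {W : World | ∀ φ, W (.not φ) = (fun b => !b) (W φ)} ∩
      ({W : World | ∀ φ ψ, W (.and φ ψ) = (W φ && W ψ)} ∩
      ({W : World | ∀ φ ψ, W (.or φ ψ) = (W φ || W ψ)} ∩
      ({W : World | ∀ φ ψ, W (.imp φ ψ) = (!W φ || W ψ)} ∩
      {W : World | ∀ φ ψ, W (.iff φ ψ) = (W φ == W ψ)}))) := by
    ext W
    simp only [World.PCons, Set.mem_inter_iff, Set.mem_setOf_eq]
  rw [this]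
  exact (key _ _).inter ((key2 _ _).inter ((key2 _ _).inter
    ((key2 (fun φ ψ => .imp φ ψ) (fun a b => !a || b)).inter
      (key2 (fun φ ψ => .iff φ ψ) (fun a b => a == b)))))

lemma isClosed_PC (D : Set Sentence) : IsClosed (PC D) := by
  have h2 : IsClosed {W : World | ∀ φ ∈ D, W φ = true} := by
    have : {W : World | ∀ φ ∈ D, W φ = true} = ⋂ φ ∈ D, {W : World | W φ = true} := by
      ext W; simp
    rw [this]
    exact isClosed_biInter fun φ _ => isClosed_eval φ true
  exact isClosed_PCons.inter h2

lemma sets_mono (D : DeductiveProcess) {a b : ℕ} (h : a ≤ b) :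
    ∀ ψ ∈ D.sets a, ψ ∈ D.sets b := by
  induction b, h using Nat.le_induction with
  | base => exact fun _ h => h
  | succ n _ ih => exact fun ψ hψ => D.nested n ψ (ih ψ hψ)

lemma PCn_anti (D : DeductiveProcess) {a b : ℕ} (h : a ≤ b) : D.PCn b ⊆ D.PCn a :=
  fun W hW => ⟨hW.1, fun ψ hψ => hW.2 ψ (sets_mono D h ψ hψ)⟩

lemma eventually_forced (D : DeductiveProcess) (φ : Sentence)
    (h : ∀ W ∈ PC D.limit, W φ = true) :
    ∃ m, ∀ n, m ≤ n → ∀ W ∈ D.PCn n, W φ = true := by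
  by_contra hc
  push_neg at hc
  set S : ℕ → Set World := fun n => D.PCn n ∩ {W | W φ = false} with hS
  have hanti : ∀ n, S (n+1) ⊆ S n := fun n =>
    Set.inter_subset_inter_left _ (PCn_anti D (Nat.le_succ n))
  have hnon : ∀ n, (S n).Nonempty := by
    intro m
    obtain ⟨n, hmn, W, hW, hWφ⟩ := hc m
    exact ⟨W, PCn_anti D hmn hW, by simpa using hWφ⟩
  have hclosed : ∀ n, IsClosed (S n) := fun n => (isClosed_PC _).inter (isClosed_eval φ false)
  obtain ⟨W, hW⟩ := IsCompact.nonempty_iInter_of_sequence_nonempty_isCompact_isClosed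
    S hanti hnon ((hclosed 0).isCompact) hclosed
  rw [Set.mem_iInter] at hW
  have hWPC : W ∈ PC D.limit :=
    ⟨(hW 0).1.1, fun ψ hψ => by obtain ⟨n, hn⟩ := hψ; exact (hW n).1.2 ψ hn⟩
  have h1 := h W hWPC
  have h2 : W φ = false := (hW 0).2
  rw [h1] at h2
  simp at h2

/-! ### Constant traders -/

def constTrade (L : List (ℚ × Sentence)) : Trade := ⟨L.map fun p => (Feature.const p.1, p.2)⟩

def constTrader (L : List (ℚ × Sentence)) : Trader where
  strat _ := constTrade L
  rank_le n p hp := by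
    rw [constTrade, List.mem_map] at hp
    obtain ⟨q, _, rfl⟩ := hp
    exact Nat.zero_le n

lemma constTrader_EC (L : List (ℚ × Sentence)) : (constTrader L).EC :=
  polyTimeConst (encodeTrade (constTrade L))

noncomputable def bval (L : List (ℚ × Sentence)) (W : World) : ℝ :=
  (L.map fun p => (p.1 : ℝ) * W.val p.2).sum

noncomputable def gsum (L : List (ℚ × Sentence)) (P : Market) (i : ℕ) : ℝ :=
  (L.map fun p => (p.1 : ℝ) * P.val i p.2).sum

noncomputable def qsum (L : List (ℚ × Sentence)) : ℝ := (L.map fun p => |(p.1 : ℝ)|).sum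

lemma abs_val_le_one (W : World) (χ : Sentence) : |W.val χ| ≤ 1 := by
  unfold World.val; split <;> simp

lemma abs_bval_le (L : List (ℚ × Sentence)) (W : World) : |bval L W| ≤ qsum L := by
  induction L with
  | nil => simp [bval, qsum]
  | cons p l ih =>
    simp only [bval, qsum, List.map_cons, List.sum_cons] at *
    refine (abs_add_le _ _).trans (add_le_add ?_ ih)
    rw [abs_mul]
    exact mul_le_of_le_one_right (abs_nonneg _) (abs_val_le_one W p.2)

lemma qsum_nonneg (L : List (ℚ × Sentence)) : 0 ≤ qsum L := by
  unfold qsum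
  exact List.sum_nonneg (by intro x hx; obtain ⟨p, _, rfl⟩ := List.mem_map.mp hx
                            exact abs_nonneg _)

lemma value_eq (P : Market) (L : List (ℚ × Sentence)) (i : ℕ) (W : World) :
    (constTrade L).value i P.valSeq W = bval L W - gsum L P i := by
  simp only [Trade.value, Trade.cash, constTrade, bval, gsum, List.map_map,
    Function.comp_def, Feature.eval, Market.valSeq, Market.val]
  ring

lemma holdings_eq (L : List (ℚ × Sentence)) (P : Market) (n : ℕ) (W : World) :
    holdings (constTrader L) P n W =
      ∑ i ∈ Finset.range (n+1), (bval L W - gsum L P i) :=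
  Finset.sum_congr rfl fun i _ => value_eq P L i W

/-! ### The main exploitation lemma -/

lemma exploit_aux (P : Market) (D : DeductiveProcess) (hLI : LogicalInductor P D)
    (hne : ∀ n, (D.PCn n).Nonempty)
    (L : List (ℚ × Sentence)) (β δ : ℝ) (hδ : 0 < δ) (m : ℕ)
    (hb : ∀ n, m ≤ n → ∀ W ∈ D.PCn n, bval L W = β)
    (hg : Filter.Tendsto (fun i => β - gsum L P i) Filter.atTop (nhds δ)) : False := by
  apply hLI (constTrader L) (constTrader_EC L)
  set hseq : ℕ → ℝ := fun i => β - gsum L P i with hseq_def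
  obtain ⟨N, hN⟩ : ∃ N, ∀ i ≥ N, δ/2 ≤ hseq i :=
    Filter.eventually_atTop.mp (hg.eventually (eventually_ge_nhds (by linarith)))
  set K : ℝ := ∑ i ∈ Finset.range N, |hseq i| with hK_def
  have hK0 : 0 ≤ K := Finset.sum_nonneg fun i _ => abs_nonneg _
  have habs : ∀ n, -(∑ i ∈ Finset.range n, |hseq i|) ≤ ∑ i ∈ Finset.range n, hseq i := by
    intro n
    rw [← Finset.sum_neg_distrib]
    exact Finset.sum_le_sum fun i _ => neg_abs_le _
  have hsum_ge : ∀ n, N ≤ n + 1 →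
      -K + ((n + 1 - N : ℕ) : ℝ) * (δ/2) ≤ ∑ i ∈ Finset.range (n+1), hseq i := by
    intro n hNn
    rw [← Finset.sum_range_add_sum_Ico hseq hNn]
    have h1 : -K ≤ ∑ i ∈ Finset.range N, hseq i := habs N
    have h2 : ((n + 1 - N : ℕ) : ℝ) * (δ/2) ≤ ∑ i ∈ Finset.Ico N (n+1), hseq i := by
      have := Finset.card_nsmul_le_sum (Finset.Ico N (n+1)) hseq (δ/2)
        (fun i hi => hN i (Finset.mem_Ico.mp hi).1)
      rwa [Nat.card_Ico, nsmul_eq_mul] at this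
    linarith
  have hsum_ge0 : ∀ n, -K ≤ ∑ i ∈ Finset.range (n+1), hseq i := by
    intro n
    rcases le_or_gt N (n+1) with hc | hc
    · have h1 := hsum_ge n hc
      have h2 : (0:ℝ) ≤ ((n + 1 - N : ℕ) : ℝ) * (δ/2) := by positivity
      linarith
    · have h1 := habs (n+1)
      have h2 : ∑ i ∈ Finset.range (n+1), |hseq i| ≤ K := by
        rw [hK_def]
        exact Finset.sum_le_sum_of_subset_of_nonneg
          (Finset.range_subset_range.mpr hc.le) (fun i _ _ => abs_nonneg _)
      linarith
  have hold_eq : ∀ n W, holdings (constTrader L) P n W =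
      (∑ i ∈ Finset.range (n+1), hseq i) + ((n:ℝ)+1) * (bval L W - β) := by
    intro n W
    rw [holdings_eq]
    have : ∀ i ∈ Finset.range (n+1), bval L W - gsum L P i = hseq i + (bval L W - β) := by
      intro i _; rw [hseq_def]; ring
    rw [Finset.sum_congr rfl this, Finset.sum_add_distrib, Finset.sum_const,
      Finset.card_range, nsmul_eq_mul]
    push_cast
    ring
  constructor
  · -- bounded below
    refine ⟨-K - ((m:ℝ)) * (qsum L + |β|), ?_⟩
    rintro x ⟨n, W, hW, rfl⟩
    rw [hold_eq]
    rcases le_or_gt m n with hmn | hnm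
    · rw [hb n hmn W hW]
      have h1 := hsum_ge0 n
      have h2 : (0:ℝ) ≤ (m:ℝ) * (qsum L + |β|) := by
        have := qsum_nonneg L
        positivity
      simp only [sub_self, mul_zero, add_zero]
      linarith
    · have h1 := hsum_ge0 n
      have h3 : |bval L W - β| ≤ qsum L + |β| :=
        (abs_sub _ _).trans (add_le_add_left (abs_bval_le L W) _)
      have h4 : ((n:ℝ)+1) * |bval L W - β| ≤ (m:ℝ) * (qsum L + |β|) := by
        have hn1 : ((n:ℝ)+1) ≤ (m:ℝ) := by exact_mod_cast hnm
        have := abs_nonneg (bval L W - β)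
        nlinarith
      have h5 := neg_abs_le (bval L W - β)
      have h6 : -((m:ℝ) * (qsum L + |β|)) ≤ ((n:ℝ)+1) * (bval L W - β) := by
        nlinarith [abs_nonneg (bval L W - β)]
      linarith
  · -- not bounded above
    rintro ⟨M, hM⟩
    obtain ⟨j, hj⟩ := exists_nat_gt ((M + K) / (δ/2))
    set n := N + j + m with hn_def
    obtain ⟨W, hW⟩ := hne n
    have hx : holdings (constTrader L) P n W ∈ plausibleValues (constTrader L) P D :=
      ⟨n, W, hW, rfl⟩
    have hle := hM hx
    rw [hold_eq, hb n (by omega) W hW] at hle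
    simp only [sub_self, mul_zero, add_zero] at hle
    have h1 := hsum_ge n (by omega)
    have hj2 : (j:ℝ) ≤ ((n + 1 - N : ℕ) : ℝ) := by
      have : n + 1 - N = j + m + 1 := by omega
      rw [this]; push_cast; linarith
    have hj3 : M + K < (j:ℝ) * (δ/2) := by
      rw [div_lt_iff₀ (by linarith : (0:ℝ) < δ/2)] at hj
      linarith
    have hj4 : (j:ℝ) * (δ/2) ≤ ((n + 1 - N : ℕ) : ℝ) * (δ/2) := by nlinarith
    linarith

end LogicalInduction


namespace LogicalInduction

/-- **Limit coherence**: the limiting prices of a logical inductor satisfy Gaifman's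
coherence conditions. -/
theorem limit_coherence (Γ : Set Sentence) (hcon : Consistent Γ) (hce : CETheory Γ)
    (P : Market) (hP : LogicalInductorOver P Γ)
    (Pinf : Sentence → ℝ)
    (hlim : ∀ φ, Filter.Tendsto (fun n => P.val n φ) Filter.atTop (nhds (Pinf φ))) :
    (∀ φ, Proves Γ φ → Pinf φ = 1) ∧
    (∀ φ, Proves Γ (.not φ) → Pinf φ = 0) ∧
    (∀ φ ψ, Proves Γ (.not (.and φ ψ)) → Pinf (.or φ ψ) = Pinf φ + Pinf ψ) := by
  obtain ⟨D, hcomp, hLI⟩ := hP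
  have hne : ∀ n, (D.PCn n).Nonempty := by
    intro n
    obtain ⟨W, hW⟩ := hcon
    have hW' : W ∈ PC D.limit := by rw [hcomp]; exact hW
    exact ⟨W, hW'.1, fun ψ hψ => hW'.2 ψ ⟨n, hψ⟩⟩
  have hev : ∀ χ : Sentence, Proves Γ χ →
      ∃ m, ∀ n, m ≤ n → ∀ W ∈ D.PCn n, W χ = true := by
    intro χ hχ
    refine eventually_forced D χ ?_
    intro W hW
    exact hχ W (by rwa [hcomp] at hW)
  have hle1 : ∀ χ, Pinf χ ≤ 1 := fun χ =>
    le_of_tendsto (hlim χ) (Filter.Eventually.of_forall fun n => by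
      show (P.price n χ : ℝ) ≤ 1
      exact_mod_cast P.le_one n χ)
  have hge0 : ∀ χ, 0 ≤ Pinf χ := fun χ =>
    ge_of_tendsto (hlim χ) (Filter.Eventually.of_forall fun n => by
      show (0:ℝ) ≤ (P.price n χ : ℝ)
      exact_mod_cast P.nonneg n χ)
  refine ⟨?_, ?_, ?_⟩
  · intro φ hp
    by_contra hne1
    have hlt : Pinf φ < 1 := lt_of_le_of_ne (hle1 φ) hne1
    obtain ⟨m, hm⟩ := hev φ hp
    refine exploit_aux P D hLI hne [((1:ℚ), φ)] 1 (1 - Pinf φ) (by linarith) m ?_ ?_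
    · intro n hn W hW
      simp [bval, World.val, hm n hn W hW]
    · have heq : (fun i => (1:ℝ) - gsum [((1:ℚ), φ)] P i) = fun i => 1 - P.val i φ := by
        funext i; simp [gsum]
      rw [heq]
      exact tendsto_const_nhds.sub (hlim φ)
  · intro φ hp
    by_contra hne2
    have hgt : 0 < Pinf φ := lt_of_le_of_ne (hge0 φ) (Ne.symm hne2)
    obtain ⟨m, hm⟩ := hev _ hp
    refine exploit_aux P D hLI hne [((-1:ℚ), φ)] 0 (Pinf φ) hgt m ?_ ?_
    · intro n hn W hW
      have h1 := hW.1.1 φ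
      have h4 := hm n hn W hW
      rw [h1] at h4
      have h5 : W φ = false := by simpa using h4
      simp [bval, World.val, h5]
    · have heq : (fun i => (0:ℝ) - gsum [((-1:ℚ), φ)] P i) = fun i => P.val i φ := by
        funext i; simp [gsum]
      rw [heq]
      exact hlim φ
  · intro φ ψ hp
    by_contra hne3
    obtain ⟨m, hm⟩ := hev _ hp
    have hbval : ∀ n, m ≤ n → ∀ W ∈ D.PCn n,
        W.val (.or φ ψ) = W.val φ + W.val ψ := by
      intro n hn W hW
      have h1 := hW.1.1 (.and φ ψ)
      have h2 := hW.1.2.1 φ ψ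
      have h3 := hW.1.2.2.1 φ ψ
      have h4 := hm n hn W hW
      rw [h1] at h4
      have h5 : (W φ && W ψ) = false := by rw [← h2]; simpa using h4
      cases hφ : W φ <;> cases hψ : W ψ <;>
        simp [World.val, h3, hφ, hψ] <;> simp [hφ, hψ] at h5
    rcases lt_or_gt_of_ne hne3 with hlt | hgt
    · refine exploit_aux P D hLI hne [((1:ℚ), .or φ ψ), ((-1:ℚ), φ), ((-1:ℚ), ψ)] 0
        (Pinf φ + Pinf ψ - Pinf (.or φ ψ)) (by linarith) m ?_ ?_
      · intro n hn W hW
        have hb := hbval n hn W hW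
        simp [bval]
        linarith
      · have heq : (fun i =>
            (0:ℝ) - gsum [((1:ℚ), Sentence.or φ ψ), ((-1:ℚ), φ), ((-1:ℚ), ψ)] P i)
            = fun i => P.val i φ + P.val i ψ - P.val i (.or φ ψ) := by
          funext i; simp [gsum]; ring
        rw [heq]
        exact ((hlim φ).add (hlim ψ)).sub (hlim (.or φ ψ))
    · refine exploit_aux P D hLI hne [((-1:ℚ), .or φ ψ), ((1:ℚ), φ), ((1:ℚ), ψ)] 0
        (Pinf (.or φ ψ) - Pinf φ - Pinf ψ) (by linarith) m ?_ ?_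
      · intro n hn W hW
        have hb := hbval n hn W hW
        simp [bval]
        linarith
      · have heq : (fun i =>
            (0:ℝ) - gsum [((-1:ℚ), Sentence.or φ ψ), ((1:ℚ), φ), ((1:ℚ), ψ)] P i)
            = fun i => P.val i (.or φ ψ) - P.val i φ - P.val i ψ := by
          funext i; simp [gsum]; ring
        rw [heq]
        exact ((hlim (.or φ ψ)).sub (hlim φ)).sub (hlim ψ)

end LogicalInduction
end

section
/- Let (w_n)_{n≥1} be a sequence of reals in [0,1] with w_1 > 0 and Σ_{n} w_n = ∞, and let (d_n)_{n≥1} be a sequence of reals in [−1,1]. Define B_n := (Σ_{i≤n} w_i d_i)/(Σ_{i≤n} w_i). If liminf_{n→∞} B_n ≤ 0 ≤ limsup_{n→∞} B_n, then 0 is a limit point of (B_n): there is a subsequence of (B_n) converging to 0. -/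
open Filter

-- auxiliary general lemma
theorem cluster_aux (B : ℕ → ℝ) (hbd : ∀ n, |B n| ≤ 1)
    (hstep : Tendsto (fun n => B (n+1) - B n) atTop (nhds 0))
    (h1 : liminf B atTop ≤ 0) (h2 : 0 ≤ limsup B atTop) :
    MapClusterPt 0 atTop B := by
  have hbdle : IsBoundedUnder (· ≤ ·) atTop B := isBoundedUnder_of ⟨1, fun n => (abs_le.1 (hbd n)).2⟩
  have hbdge : IsBoundedUnder (· ≥ ·) atTop B := isBoundedUnder_of ⟨-1, fun n => (abs_le.1 (hbd n)).1⟩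
  rw [mapClusterPt_iff_frequently]
  intro s hs
  obtain ⟨ε, hε, hball⟩ := Metric.mem_nhds_iff.1 hs
  have key : ∃ᶠ n in atTop, |B n| < ε := by
    by_contra hc
    rw [not_frequently] at hc
    have hc' : ∀ᶠ n in atTop, ε ≤ |B n| := hc.mono fun n h => not_lt.1 h
    have hstep' : ∀ᶠ n in atTop, |B (n+1) - B n| < 2 * ε := by
      have := (hstep.eventually (Metric.ball_mem_nhds 0 (by linarith : (0:ℝ) < 2*ε)))
      exact this.mono fun n h => by simpa [Real.dist_eq] using h
    obtain ⟨N, hN⟩ := (hc'.and hstep').exists_forall_of_atTop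
    have habs : ∀ n ≥ N, ε ≤ |B n| := fun n hn => (hN n hn).1
    have hstp : ∀ n ≥ N, |B (n+1) - B n| < 2 * ε := fun n hn => (hN n hn).2
    rcases abs_le.1 (le_refl |B N|) with _
    -- sign dichotomy at N
    rcases le_or_gt ε (B N) with hpos | hneg
    · -- B n ≥ ε for all n ≥ N
      have hall : ∀ n ≥ N, ε ≤ B n := by
        intro n hn
        induction n with
        | zero => simpa [Nat.le_zero.1 hn] using hpos
        | succ m ih =>
          rcases Nat.lt_or_ge N (m+1) with h | h
          · have hm : N ≤ m := Nat.lt_succ_iff.1 h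
            have ihm := ih hm
            rcases abs_le.1 (le_refl |B (m+1)|) with _
            rcases le_or_gt ε (B (m+1)) with h1 | h1
            · exact h1
            · have : B (m+1) ≤ -ε := by
                have := habs (m+1) (le_of_lt h)
                rcases abs_cases (B (m+1)) with ⟨he, _⟩ | ⟨he, _⟩ <;> [linarith; linarith]
              have := hstp m hm
              rw [abs_lt] at this
              linarith
          · have : N = m + 1 := le_antisymm hn h
            rw [← this]; exact hpos
      have : ∀ᶠ n in atTop, ¬ B n < ε := eventually_atTop.2 ⟨N, fun n hn => not_lt.2 (hall n hn)⟩
      have hfreq : ∃ᶠ n in atTop, B n < ε := frequently_lt_of_liminf_lt hbdle.isCoboundedUnder_ge (lt_of_le_of_lt h1 hε)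
      exact hfreq.and_eventually this |>.exists.elim fun n ⟨a, b⟩ => b a
    · -- B N ≤ -ε
      have hneg' : B N ≤ -ε := by
        have := habs N le_rfl
        rcases abs_cases (B N) with ⟨he, _⟩ | ⟨he, _⟩ <;> linarith
      have hall : ∀ n ≥ N, B n ≤ -ε := by
        intro n hn
        induction n with
        | zero => simpa [Nat.le_zero.1 hn] using hneg'
        | succ m ih =>
          rcases Nat.lt_or_ge N (m+1) with h | h
          · have hm : N ≤ m := Nat.lt_succ_iff.1 h
            have ihm := ih hm
            rcases le_or_gt (B (m+1)) (-ε) with h1 | h1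
            · exact h1
            · have : ε ≤ B (m+1) := by
                have := habs (m+1) (le_of_lt h)
                rcases abs_cases (B (m+1)) with ⟨he, _⟩ | ⟨he, _⟩ <;> linarith
              have := hstp m hm
              rw [abs_lt] at this
              linarith
          · have : N = m + 1 := le_antisymm hn h
            rw [← this]; exact hneg'
      have hev : ∀ᶠ n in atTop, ¬ (-ε) < B n := eventually_atTop.2 ⟨N, fun n hn => not_lt.2 (hall n hn)⟩
      have hfreq : ∃ᶠ n in atTop, (-ε) < B n := frequently_lt_of_lt_limsup hbdge.isCoboundedUnder_le (lt_of_lt_of_le (by linarith) h2)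
      exact hfreq.and_eventually hev |>.exists.elim fun n ⟨a, b⟩ => b a
  exact key.mono fun n h => hball (by simpa [Metric.mem_ball, Real.dist_eq] using h)

/-- **Weighted averages with divergent weights have 0 as a limit point** whenever their
liminf and limsup lie on opposite sides of (or at) 0. -/
theorem weighted_average_zero_cluster_point
    (w d : ℕ → ℝ) (hw : ∀ n, w n ∈ Set.Icc (0 : ℝ) 1) (hw0 : 0 < w 0)
    (hdiv : Filter.Tendsto (fun n => ∑ i ∈ Finset.range (n + 1), w i)
      Filter.atTop Filter.atTop)
    (hd : ∀ n, d n ∈ Set.Icc (-1 : ℝ) 1)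
    (h1 : Filter.liminf
      (fun n => (∑ i ∈ Finset.range (n + 1), w i * d i) / ∑ i ∈ Finset.range (n + 1), w i)
      Filter.atTop ≤ 0)
    (h2 : 0 ≤ Filter.limsup
      (fun n => (∑ i ∈ Finset.range (n + 1), w i * d i) / ∑ i ∈ Finset.range (n + 1), w i)
      Filter.atTop) :
    MapClusterPt 0 Filter.atTop
      (fun n => (∑ i ∈ Finset.range (n + 1), w i * d i) /
        ∑ i ∈ Finset.range (n + 1), w i) := by
  set S : ℕ → ℝ := fun n => ∑ i ∈ Finset.range (n + 1), w i with hS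
  set A : ℕ → ℝ := fun n => ∑ i ∈ Finset.range (n + 1), w i * d i with hA
  have hSpos : ∀ n, 0 < S n := fun n =>
    lt_of_lt_of_le hw0 (Finset.single_le_sum (fun i _ => (hw i).1)
      (Finset.mem_range.2 (Nat.succ_pos n)))
  have hAbd : ∀ n, |A n| ≤ S n := by
    intro n
    calc |A n| ≤ ∑ i ∈ Finset.range (n + 1), |w i * d i| := Finset.abs_sum_le_sum_abs _ _
      _ ≤ S n := Finset.sum_le_sum fun i _ => by
        rw [abs_mul, abs_of_nonneg (hw i).1]
        calc w i * |d i| ≤ w i * 1 := mul_le_mul_of_nonneg_left (abs_le.2 ⟨(hd i).1, (hd i).2⟩) (hw i).1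
          _ = w i := mul_one _
  have hbd : ∀ n, |A n / S n| ≤ 1 := fun n => by
    rw [abs_div, abs_of_pos (hSpos n), div_le_one (hSpos n)]; exact hAbd n
  have hstepbd : ∀ n, |A (n+1) / S (n+1) - A n / S n| ≤ 2 / S (n+1) := by
    intro n
    have hS1 : S (n+1) = S n + w (n+1) := by
      simp [hS, Finset.sum_range_succ]
    have hA1 : A (n+1) = A n + w (n+1) * d (n+1) := by
      simp [hA, Finset.sum_range_succ]
    have h0 : S n ≠ 0 := (hSpos n).ne'
    have h0' : S (n+1) ≠ 0 := (hSpos (n+1)).ne'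
    have heq : A (n+1) / S (n+1) - A n / S n
        = w (n+1) * (d (n+1) * S n - A n) / (S (n+1) * S n) := by
      field_simp
      rw [hS1, hA1]; ring
    rw [heq, abs_div, abs_of_pos (mul_pos (hSpos (n+1)) (hSpos n)),
      div_le_div_iff₀ (mul_pos (hSpos (n+1)) (hSpos n)) (hSpos (n+1))]
    have hnum : |w (n+1) * (d (n+1) * S n - A n)| ≤ 1 * (2 * S n) := by
      rw [abs_mul]
      apply mul_le_mul (by rw [abs_of_nonneg (hw (n+1)).1]; exact (hw (n+1)).2) ?_ (abs_nonneg _)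
        zero_le_one
      have h1 : |d (n+1) * S n| ≤ S n := by
        rw [abs_mul, abs_of_pos (hSpos n)]
        nlinarith [abs_le.2 ⟨(hd (n+1)).1, (hd (n+1)).2⟩, (hSpos n).le]
      calc |d (n+1) * S n - A n| ≤ |d (n+1) * S n| + |A n| := abs_sub _ _
        _ ≤ S n + S n := add_le_add h1 (hAbd n)
        _ = 2 * S n := by ring
    nlinarith [hSpos n, hSpos (n+1)]
  have hstep : Filter.Tendsto (fun n => A (n+1) / S (n+1) - A n / S n) Filter.atTop (nhds 0) := by
    have hS1 : Filter.Tendsto (fun n => S (n+1)) Filter.atTop Filter.atTop :=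
      hdiv.comp (Filter.tendsto_add_atTop_nat 1)
    have h2S : Filter.Tendsto (fun n => 2 / S (n+1)) Filter.atTop (nhds 0) :=
      Filter.Tendsto.div_atTop tendsto_const_nhds hS1
    exact squeeze_zero_norm (fun n => hstepbd n) h2S
  exact cluster_aux _ hbd hstep h1 h2
end
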